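/- Fix an integer b ≥ 2 and set ζ_k = ∑_{j≥k} (b−1)² / ((b^j − 1)(b^{j+1} − 1)) for k ≥ 1. Then ζ_{i+1} < ζ_i / b² for every i ≥ 1. -/

import Mathlib

/-- `ζ_k = ∑_{j ≥ k} (b−1)² / ((b^j − 1)(b^{j+1} − 1))`, written as a sum over `j = k + i`. -/
noncomputable def zeta (b k : ℕ) : ℝ :=
  ∑' i : ℕ, ((b : ℝ) - 1) ^ 2 / (((b : ℝ) ^ (k + i) - 1) * ((b : ℝ) ^ (k + i + 1) - 1))

lemma pow_sub_one_pos {b : ℕ} (hb : 2 ≤ b) {m : ℕ} (hm : 1 ≤ m) :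
    (0 : ℝ) < (b : ℝ) ^ m - 1 := by
  have hb1 : (1 : ℝ) < (b : ℝ) := by exact_mod_cast hb.trans_lt' one_lt_two
  have : (1 : ℝ) < (b : ℝ) ^ m := one_lt_pow₀ hb1 (by omega)
  linarith

set_option maxHeartbeats 800000 in
lemma zeta_summable {b : ℕ} (hb : 2 ≤ b) {k : ℕ} (hk : 1 ≤ k) :
    Summable (fun j : ℕ =>
      ((b : ℝ) - 1) ^ 2 / (((b : ℝ) ^ (k + j) - 1) * ((b : ℝ) ^ (k + j + 1) - 1))) := by
  have hb2 : (2 : ℝ) ≤ (b : ℝ) := by exact_mod_cast hb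
  have hc : (0 : ℝ) ≤ ((b : ℝ) - 1) ^ 2 := sq_nonneg _
  refine Summable.of_nonneg_of_le ?_ ?_
    ((summable_geometric_of_lt_one (by norm_num) (by norm_num)).mul_left
      (((b : ℝ) - 1) ^ 2) : Summable (fun j : ℕ => ((b : ℝ) - 1) ^ 2 * (1 / 2) ^ j))
  · intro j
    have h1 := pow_sub_one_pos hb (m := k + j) (by omega)
    have h2 := pow_sub_one_pos hb (m := k + j + 1) (by omega)
    positivity
  · intro j
    have h1 : (2 : ℝ) ^ j ≤ (b : ℝ) ^ (k + j) - 1 := by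
      have hbp : (2 : ℝ) ^ j ≤ (b : ℝ) ^ j := pow_le_pow_left₀ (by norm_num) hb2 j
      have hgrow : (b : ℝ) ^ j * 2 ≤ (b : ℝ) ^ (k + j) := by
        calc (b : ℝ) ^ j * 2 ≤ (b : ℝ) ^ j * (b : ℝ) := by
              have : (0:ℝ) < (b:ℝ)^j := by positivity
              nlinarith
          _ = (b : ℝ) ^ (j + 1) := (pow_succ _ _).symm
          _ ≤ (b : ℝ) ^ (k + j) := by
              apply pow_le_pow_right₀ (by linarith) (by omega)
      have hone : (1 : ℝ) ≤ 2 ^ j := one_le_pow₀ (by norm_num)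
      linarith
    have h2 : (1 : ℝ) ≤ (b : ℝ) ^ (k + j + 1) - 1 := by
      have := pow_sub_one_pos hb (m := k + j + 1) (by omega)
      have hbp : (2 : ℝ) ^ (k + j + 1) ≤ (b : ℝ) ^ (k + j + 1) :=
        pow_le_pow_left₀ (by norm_num) hb2 _
      have h2' : (2 : ℝ) ≤ (2 : ℝ) ^ (k + j + 1) := by
        calc (2:ℝ) = 2 ^ 1 := (pow_one 2).symm
          _ ≤ 2 ^ (k + j + 1) := pow_le_pow_right₀ (by norm_num) (by omega)
      linarith
    have h2p : (0 : ℝ) < (2 : ℝ) ^ j := by positivity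
    calc ((b : ℝ) - 1) ^ 2 / (((b : ℝ) ^ (k + j) - 1) * ((b : ℝ) ^ (k + j + 1) - 1))
        ≤ ((b : ℝ) - 1) ^ 2 / (2 : ℝ) ^ j := by
          apply div_le_div_of_nonneg_left hc h2p
          calc (2:ℝ)^j = 2^j * 1 := (mul_one _).symm
            _ ≤ ((b : ℝ) ^ (k + j) - 1) * ((b : ℝ) ^ (k + j + 1) - 1) := by
                apply mul_le_mul h1 h2 (by norm_num) (by linarith)
      _ = ((b : ℝ) - 1) ^ 2 * (1 / 2) ^ j := by
          rw [div_pow, one_pow, mul_one_div]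

/-- For an integer `b ≥ 2`, `ζ_{i+1} < ζ_i / b²` for every `i ≥ 1`. -/
theorem stmt4 (b : ℕ) (hb : 2 ≤ b) (i : ℕ) (hi : 1 ≤ i) :
    zeta b (i + 1) < zeta b i / (b : ℝ) ^ 2 := by
  have hb1 : (1 : ℝ) < (b : ℝ) := by exact_mod_cast hb.trans_lt' one_lt_two
  have hb2 : (1 : ℝ) < (b : ℝ) ^ 2 := one_lt_pow₀ hb1 (by norm_num)
  have key : ∀ j : ℕ,
      ((b : ℝ) - 1) ^ 2 / (((b : ℝ) ^ (i + 1 + j) - 1) * ((b : ℝ) ^ (i + 1 + j + 1) - 1)) <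
      ((b : ℝ) - 1) ^ 2 / (((b : ℝ) ^ (i + j) - 1) * ((b : ℝ) ^ (i + j + 1) - 1)) / (b : ℝ) ^ 2 := by
    intro j
    have hA := pow_sub_one_pos hb (m := i + j) (by omega)
    have hB := pow_sub_one_pos hb (m := i + j + 1) (by omega)
    have hC := pow_sub_one_pos hb (m := i + j + 2) (by omega)
    have hnum : (0 : ℝ) < ((b : ℝ) - 1) ^ 2 := pow_pos (by linarith) 2
    have heq1 : i + 1 + j = i + j + 1 := by omega
    have heq2 : i + 1 + j + 1 = i + j + 2 := by omega
    rw [heq2, heq1, div_div]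
    apply div_lt_div_of_pos_left hnum (mul_pos (mul_pos hA hB) (pow_pos (by linarith) 2))
    -- need: (b^(i+j)-1)*(b^(i+j+1)-1)*b^2 < (b^(i+j+1)-1)*(b^(i+j+2)-1)
    have hpow : (b : ℝ) ^ (i + j) * (b : ℝ) ^ 2 = (b : ℝ) ^ (i + j + 2) := by
      rw [← pow_add]
    have hstep : ((b : ℝ) ^ (i + j) - 1) * (b : ℝ) ^ 2 < (b : ℝ) ^ (i + j + 2) - 1 := by
      nlinarith
    calc ((b : ℝ) ^ (i + j) - 1) * ((b : ℝ) ^ (i + j + 1) - 1) * (b : ℝ) ^ 2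
        = ((b : ℝ) ^ (i + j) - 1) * (b : ℝ) ^ 2 * ((b : ℝ) ^ (i + j + 1) - 1) := by ring
      _ < ((b : ℝ) ^ (i + j + 2) - 1) * ((b : ℝ) ^ (i + j + 1) - 1) :=
          mul_lt_mul_of_pos_right hstep hB
      _ = ((b : ℝ) ^ (i + j + 1) - 1) * ((b : ℝ) ^ (i + j + 2) - 1) := by ring
  unfold zeta
  rw [← tsum_div_const]
  exact Summable.tsum_lt_tsum (fun j => (key j).le) (key 0)
    (zeta_summable hb (by omega))
    (((zeta_summable hb hi)).div_const _)
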